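/- Let c > 0 and s be real numbers and let A be the operator on R = ℝ[q_1, q_2, …] defined below. Then R is the direct sum of the eigenspaces of A; the eigenvalues of A are exactly 0 and −m(m−1+c) for integers m ≥ 2; the eigenspace for the eigenvalue 0 is one-dimensional and consists of the constants; and for each integer m ≥ 2 the eigenspace for the eigenvalue −m(m−1+c) has dimension equal to the number of partitions of m all of whose parts are ≥ 2. -/

import Mathlib

open MvPolynomial

noncomputable def qv (i : ℕ) : MvPolynomial ℕ+ ℝ :=
  if h : 0 < i then X (⟨i, h⟩ : ℕ+) else 1

section SupportLemmas

lemma supp_single (f : MvPolynomial ℕ+ ℝ) (co : ℕ+ → ℝ) (Q : ℕ+ → MvPolynomial ℕ+ ℝ) :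
    (Function.support fun i : ℕ+ => co i • (Q i * pderiv i f)).Finite := by
  apply Set.Finite.subset f.vars.finite_toSet
  intro i hi
  simp only [Function.mem_support] at hi
  by_contra hmem
  exact hi (by rw [pderiv_eq_zero_of_notMem_vars hmem, mul_zero, smul_zero])

lemma supp_double (f : MvPolynomial ℕ+ ℝ) (co : ℕ+ × ℕ+ → ℝ)
    (Q : ℕ+ × ℕ+ → MvPolynomial ℕ+ ℝ) :
    (Function.support fun p : ℕ+ × ℕ+ =>
      co p • (Q p * pderiv p.1 (pderiv p.2 f))).Finite := by
  apply Set.Finite.subset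
    (Set.Finite.biUnion f.vars.finite_toSet
      (fun j _ => Set.Finite.image (fun i => (i, j)) (pderiv j f).vars.finite_toSet))
  intro p hp
  simp only [Function.mem_support] at hp
  have h2 : pderiv p.2 f ≠ 0 := by
    intro h
    exact hp (by rw [h, map_zero, mul_zero, smul_zero])
  have h2v : p.2 ∈ f.vars := by
    by_contra h; exact h2 (pderiv_eq_zero_of_notMem_vars h)
  have h1 : p.1 ∈ (pderiv p.2 f).vars := by
    by_contra h
    exact hp (by rw [pderiv_eq_zero_of_notMem_vars h, mul_zero, smul_zero])
  exact Set.mem_biUnion h2v ⟨p.1, h1, rfl⟩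

lemma supp_pair (f : MvPolynomial ℕ+ ℝ) (co : ℕ × ℕ → ℝ) (Q : ℕ × ℕ → MvPolynomial ℕ+ ℝ) :
    (Function.support fun p : ℕ × ℕ =>
      co p • (Q p * pderiv ((p.1 + p.2 + 2).toPNat (by omega)) f)).Finite := by
  apply Set.Finite.subset
    (Set.Finite.biUnion f.vars.finite_toSet
      (fun v _ => Set.Finite.subset
        (Finset.range ((v : ℕ) + 1) ×ˢ Finset.range ((v : ℕ) + 1)).finite_toSet
        (fun p (hp : p.1 + p.2 + 2 = (v : ℕ)) => by
          simp only [Finset.coe_product, Set.mem_prod, Finset.mem_coe, Finset.mem_range]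
          omega)))
  intro p hp
  simp only [Function.mem_support] at hp
  have hv : (p.1 + p.2 + 2).toPNat (by omega) ∈ f.vars := by
    by_contra h
    exact hp (by rw [pderiv_eq_zero_of_notMem_vars h, mul_zero, smul_zero])
  refine Set.mem_biUnion hv ?_
  show p.1 + p.2 + 2 = _
  rfl

end SupportLemmas

noncomputable def Afun (c s : ℝ) (f : MvPolynomial ℕ+ ℝ) : MvPolynomial ℕ+ ℝ :=
  (∑ᶠ p : ℕ+ × ℕ+,
      ((((p.1 : ℕ) : ℝ) + 1) * (((p.2 : ℕ) : ℝ) + 1)) •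
        ((qv ((p.1 : ℕ) + (p.2 : ℕ)) - qv (p.1 : ℕ) * qv (p.2 : ℕ)) *
          pderiv p.1 (pderiv p.2 f)))
    - c • (∑ᶠ i : ℕ+, (((i : ℕ) : ℝ) + 1) • (qv (i : ℕ) * pderiv i f))
    + s • (∑ᶠ i : ℕ+, (((i : ℕ) : ℝ) + 1) • (qv ((i : ℕ) - 1) * pderiv i f))
    + (∑ᶠ p : ℕ × ℕ,
        ((p.1 : ℝ) + (p.2 : ℝ) + 3) •
          (qv p.1 * qv p.2 * pderiv ((p.1 + p.2 + 2).toPNat (by omega)) f))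
    - (∑ᶠ i : ℕ+, (((i : ℕ) : ℝ) * (((i : ℕ) : ℝ) + 1)) • (qv (i : ℕ) * pderiv i f))

noncomputable def Alin (c s : ℝ) : MvPolynomial ℕ+ ℝ →ₗ[ℝ] MvPolynomial ℕ+ ℝ where
  toFun := Afun c s
  map_add' f g := by
    have e1 :
        (∑ᶠ p : ℕ+ × ℕ+,
          ((((p.1 : ℕ) : ℝ) + 1) * (((p.2 : ℕ) : ℝ) + 1)) •
            ((qv ((p.1 : ℕ) + (p.2 : ℕ)) - qv (p.1 : ℕ) * qv (p.2 : ℕ)) *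
              pderiv p.1 (pderiv p.2 (f + g))))
        = (∑ᶠ p : ℕ+ × ℕ+,
            ((((p.1 : ℕ) : ℝ) + 1) * (((p.2 : ℕ) : ℝ) + 1)) •
              ((qv ((p.1 : ℕ) + (p.2 : ℕ)) - qv (p.1 : ℕ) * qv (p.2 : ℕ)) *
                pderiv p.1 (pderiv p.2 f)))
          + ∑ᶠ p : ℕ+ × ℕ+,
              ((((p.1 : ℕ) : ℝ) + 1) * (((p.2 : ℕ) : ℝ) + 1)) •
                ((qv ((p.1 : ℕ) + (p.2 : ℕ)) - qv (p.1 : ℕ) * qv (p.2 : ℕ)) *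
                  pderiv p.1 (pderiv p.2 g)) := by
      rw [← finsum_add_distrib (supp_double f _ _) (supp_double g _ _)]
      exact finsum_congr fun p => by
        rw [map_add, map_add, mul_add (qv ((p.1 : ℕ) + (p.2 : ℕ)) - qv (p.1 : ℕ) * qv (p.2 : ℕ)), smul_add]
    have e2 : ∀ co : ℕ+ → ℝ, ∀ Q : ℕ+ → MvPolynomial ℕ+ ℝ,
        (∑ᶠ i : ℕ+, co i • (Q i * pderiv i (f + g)))
        = (∑ᶠ i : ℕ+, co i • (Q i * pderiv i f))
          + ∑ᶠ i : ℕ+, co i • (Q i * pderiv i g) := by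
      intro co Q
      rw [← finsum_add_distrib (supp_single f _ _) (supp_single g _ _)]
      exact finsum_congr fun i => by rw [map_add, mul_add (Q i), smul_add]
    have e4 :
        (∑ᶠ p : ℕ × ℕ,
          ((p.1 : ℝ) + (p.2 : ℝ) + 3) •
            (qv p.1 * qv p.2 * pderiv ((p.1 + p.2 + 2).toPNat (by omega)) (f + g)))
        = (∑ᶠ p : ℕ × ℕ,
            ((p.1 : ℝ) + (p.2 : ℝ) + 3) •
              (qv p.1 * qv p.2 * pderiv ((p.1 + p.2 + 2).toPNat (by omega)) f))
          + ∑ᶠ p : ℕ × ℕ,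
              ((p.1 : ℝ) + (p.2 : ℝ) + 3) •
                (qv p.1 * qv p.2 * pderiv ((p.1 + p.2 + 2).toPNat (by omega)) g) := by
      rw [← finsum_add_distrib (supp_pair f _ _) (supp_pair g _ _)]
      exact finsum_congr fun p => by rw [map_add, mul_add (qv p.1 * qv p.2), smul_add]
    simp only [Afun, e1, e2, e4, smul_add]
    abel
  map_smul' r f := by
    have e1 :
        (∑ᶠ p : ℕ+ × ℕ+,
          ((((p.1 : ℕ) : ℝ) + 1) * (((p.2 : ℕ) : ℝ) + 1)) •
            ((qv ((p.1 : ℕ) + (p.2 : ℕ)) - qv (p.1 : ℕ) * qv (p.2 : ℕ)) *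
              pderiv p.1 (pderiv p.2 (r • f))))
        = r • ∑ᶠ p : ℕ+ × ℕ+,
            ((((p.1 : ℕ) : ℝ) + 1) * (((p.2 : ℕ) : ℝ) + 1)) •
              ((qv ((p.1 : ℕ) + (p.2 : ℕ)) - qv (p.1 : ℕ) * qv (p.2 : ℕ)) *
                pderiv p.1 (pderiv p.2 f)) := by
      rw [smul_finsum' r (supp_double f _ _)]
      exact finsum_congr fun p => by
        rw [Derivation.map_smul, Derivation.map_smul, mul_smul_comm, smul_comm]
    have e2 : ∀ co : ℕ+ → ℝ, ∀ Q : ℕ+ → MvPolynomial ℕ+ ℝ,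
        (∑ᶠ i : ℕ+, co i • (Q i * pderiv i (r • f)))
        = r • ∑ᶠ i : ℕ+, co i • (Q i * pderiv i f) := by
      intro co Q
      rw [smul_finsum' r (supp_single f _ _)]
      exact finsum_congr fun i => by rw [Derivation.map_smul, mul_smul_comm, smul_comm]
    have e4 :
        (∑ᶠ p : ℕ × ℕ,
          ((p.1 : ℝ) + (p.2 : ℝ) + 3) •
            (qv p.1 * qv p.2 * pderiv ((p.1 + p.2 + 2).toPNat (by omega)) (r • f)))
        = r • ∑ᶠ p : ℕ × ℕ,
            ((p.1 : ℝ) + (p.2 : ℝ) + 3) •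
              (qv p.1 * qv p.2 * pderiv ((p.1 + p.2 + 2).toPNat (by omega)) f) := by
      rw [smul_finsum' r (supp_pair f _ _)]
      exact finsum_congr fun p => by rw [Derivation.map_smul, mul_smul_comm, smul_comm]
    simp only [Afun, e1, e2, e4, RingHom.id_apply]
    rw [smul_sub, smul_add, smul_add, smul_sub, smul_comm c r, smul_comm s r]

abbrev Rp := MvPolynomial ℕ+ ℝ

def wt (k : ℕ+ →₀ ℕ) : ℕ := k.sum fun i e => e * ((i : ℕ) + 1)

lemma wt_add (a b : ℕ+ →₀ ℕ) : wt (a + b) = wt a + wt b :=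
  Finsupp.sum_add_index' (fun _ => zero_mul _) (fun _ m n => add_mul m n _)

lemma wt_single (i : ℕ+) (e : ℕ) : wt (Finsupp.single i e) = e * ((i:ℕ)+1) :=
  Finsupp.sum_single_index (zero_mul _)

lemma wt_zero : wt 0 = 0 := Finsupp.sum_zero_index

lemma single_add_tsub {k : ℕ+ →₀ ℕ} {i : ℕ+} (h : k i ≠ 0) :
    Finsupp.single i 1 + (k - Finsupp.single i 1) = k := by
  ext j
  simp only [Finsupp.coe_add, Finsupp.coe_tsub, Pi.add_apply, Pi.sub_apply,
    Finsupp.single_apply]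
  rcases eq_or_ne i j with rfl | hij
  · simp only [if_pos rfl]; simp; omega
  · simp only [if_neg hij]; omega

lemma wt_sub_single {k : ℕ+ →₀ ℕ} {i : ℕ+} (h : k i ≠ 0) :
    wt (k - Finsupp.single i 1) + ((i:ℕ)+1) = wt k := by
  conv_rhs => rw [← single_add_tsub h]
  rw [wt_add, wt_single, one_mul, add_comm]

lemma wt_eq_zero {k : ℕ+ →₀ ℕ} (h : wt k = 0) : k = 0 := by
  by_contra hk
  obtain ⟨i, hi⟩ := Finsupp.ne_iff.mp hk
  simp only [Finsupp.coe_zero, Pi.zero_apply] at hi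
  have := wt_sub_single hi
  omega

lemma wt_ne_one (k : ℕ+ →₀ ℕ) : wt k ≠ 1 := by
  intro h
  by_cases hk : k = 0
  · rw [hk, wt_zero] at h; omega
  · obtain ⟨i, hi⟩ := Finsupp.ne_iff.mp hk
    simp only [Finsupp.coe_zero, Pi.zero_apply] at hi
    have h1 := wt_sub_single hi
    have h2 : 1 ≤ (i:ℕ) := i.2
    omega

noncomputable def Wlt (n : ℕ) : Submodule ℝ Rp where
  carrier := {f | ∀ u ∈ f.support, wt u < n}
  zero_mem' := by simp
  add_mem' := by
    intro f g hf hg u hu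
    rcases Finset.mem_union.mp (MvPolynomial.support_add hu) with h | h
    exacts [hf u h, hg u h]
  smul_mem' := by
    intro a f hf u hu
    exact hf u (MvPolynomial.support_smul hu)

lemma mem_Wlt_iff {n : ℕ} {f : Rp} : f ∈ Wlt n ↔ ∀ u ∈ f.support, wt u < n := Iff.rfl

lemma monomial_mem_Wlt {n : ℕ} {u : ℕ+ →₀ ℕ} {a : ℝ} (h : a ≠ 0 → wt u < n) :
    (monomial u a : Rp) ∈ Wlt n := by
  intro v hv
  rw [MvPolynomial.support_monomial] at hv
  split at hv
  · simp at hv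
  · next ha => rw [Finset.mem_singleton.mp hv]; exact h ha

lemma Wlt_mono {n m : ℕ} (h : n ≤ m) : Wlt n ≤ Wlt m :=
  fun _ hf u hu => lt_of_lt_of_le (hf u hu) h

lemma Wlt_zero : Wlt 0 = ⊥ := by
  rw [eq_bot_iff]
  intro f hf
  simp only [Submodule.mem_bot]
  rw [← MvPolynomial.support_eq_empty, Finset.eq_empty_iff_forall_notMem]
  exact fun u hu => absurd (hf u hu) (by omega)

lemma mem_of_support {f : Rp} {W : Submodule ℝ Rp}
    (h : ∀ u ∈ f.support, (monomial u 1 : Rp) ∈ W) : f ∈ W := by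
  rw [MvPolynomial.as_sum f]
  refine Submodule.sum_mem _ fun u hu => ?_
  have : (monomial u (MvPolynomial.coeff u f) : Rp) = MvPolynomial.coeff u f • monomial u 1 := by
    rw [MvPolynomial.smul_monomial, smul_eq_mul, mul_one]
  rw [this]
  exact Submodule.smul_mem _ _ (h u hu)

noncomputable def qx (n : ℕ) : ℕ+ →₀ ℕ := if h : 0 < n then Finsupp.single ⟨n, h⟩ 1 else 0

lemma qv_eq_monomial (n : ℕ) : qv n = monomial (qx n) 1 := by
  rw [qv, qx]
  split
  · rfl
  · rw [MvPolynomial.monomial_zero', MvPolynomial.C_1]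

lemma wt_qx_le (n : ℕ) : wt (qx n) ≤ n + 1 := by
  rw [qx]
  split
  · erw [wt_single]; simp
  · rw [wt_zero]; omega

lemma qx_coe (i : ℕ+) : qx (i : ℕ) = Finsupp.single i 1 := by
  have h : (⟨(i : ℕ), i.2⟩ : ℕ+) = i := rfl
  simp only [qx, h]
  exact dif_pos i.2

noncomputable def lam (c : ℝ) (m : ℕ) : ℝ := -((m : ℝ) * ((m : ℝ) - 1 + c))

lemma lam_strictAnti {c : ℝ} (hc : 0 < c) : StrictAnti (lam c) := by
  intro m m' h
  simp only [lam, neg_lt_neg_iff]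
  have h1 : (m : ℝ) < m' := by exact_mod_cast h
  have h0 : (0 : ℝ) ≤ m := Nat.cast_nonneg m
  have h2 : (1 : ℝ) ≤ (m' : ℝ) := by
    have : 1 ≤ m' := Nat.one_le_of_lt (Nat.lt_of_le_of_lt (Nat.zero_le m) h)
    exact_mod_cast this
  have key : 0 < ((m' : ℝ) - m) * ((m' : ℝ) + m - 1 + c) :=
    mul_pos (by linarith) (by linarith)
  nlinarith [key]

lemma lam_inj {c : ℝ} (hc : 0 < c) : Function.Injective (lam c) :=
  (lam_strictAnti hc).injective

lemma lam_zero (c : ℝ) : lam c 0 = 0 := by simp [lam]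


lemma qvc (i : ℕ+) : qv (i : ℕ) = monomial (Finsupp.single i 1) (1 : ℝ) := by
  rw [qv_eq_monomial, qx_coe]

lemma qv_mul_mono (n : ℕ) (u : ℕ+ →₀ ℕ) (a : ℝ) :
    qv n * monomial u a = monomial (qx n + u) a := by
  rw [qv_eq_monomial, monomial_mul, one_mul]

lemma finsum_single_supp (k : ℕ+ →₀ ℕ) (co : ℕ+ → ℝ) (Q : ℕ+ → Rp) :
    (∑ᶠ i : ℕ+, co i • (Q i * pderiv i (monomial k (1:ℝ))))
      = ∑ i ∈ k.support, co i • (Q i * pderiv i (monomial k 1)) := by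
  apply finsum_eq_sum_of_support_subset
  intro i hi
  simp only [Function.mem_support] at hi
  simp only [Finset.coe_sort_coe, Finset.mem_coe, Finsupp.mem_support_iff]
  intro h0
  apply hi
  rw [pderiv_monomial, one_mul, h0]
  simp

lemma Afun_monomial (c s : ℝ) (k : ℕ+ →₀ ℕ) :
    Afun c s (monomial k 1) - lam c (wt k) • (monomial k 1 : Rp) ∈ Wlt (wt k) := by
  classical
  set μ : Rp := monomial k 1 with hμ
  set S : Finset ℕ+ := k.support with hS
  have hder : ∀ i : ℕ+, pderiv i μ = monomial (k - Finsupp.single i 1) ((k i : ℝ)) := by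
    intro i; rw [hμ, pderiv_monomial, one_mul]
  have hder2 : ∀ i j : ℕ+, pderiv i (pderiv j μ)
      = monomial (k - Finsupp.single j 1 - Finsupp.single i 1)
          ((k j : ℝ) * (((k - Finsupp.single j 1 : ℕ+ →₀ ℕ) i : ℝ))) := by
    intro i j; rw [hder j, pderiv_monomial]
  -- diagonal single sums
  have hdiag : ∀ co : ℕ+ → ℝ,
      (∑ᶠ i : ℕ+, co i • (qv (i : ℕ) * pderiv i μ))
        = (∑ i ∈ S, co i * (k i : ℝ)) • μ := by
    intro co
    rw [hμ, finsum_single_supp, Finset.sum_smul]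
    refine Finset.sum_congr rfl fun i hi => ?_
    rw [← hμ, hder i, qvc, monomial_mul, one_mul,
        single_add_tsub (Finsupp.mem_support_iff.mp hi), hμ,
        MvPolynomial.smul_monomial, MvPolynomial.smul_monomial,
        smul_eq_mul, smul_eq_mul, mul_one]
  -- T3 membership
  have hT3 : (∑ᶠ i : ℕ+, (((i:ℕ):ℝ)+1) • (qv ((i:ℕ)-1) * pderiv i μ)) ∈ Wlt (wt k) := by
    rw [hμ, finsum_single_supp]
    refine Submodule.sum_mem _ fun i hi => ?_
    rw [← hμ, hder i, qv_mul_mono]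
    refine Submodule.smul_mem _ _ (monomial_mem_Wlt fun hne => ?_)
    have hki : k i ≠ 0 := fun h => hne (by rw [h, Nat.cast_zero])
    have h1 := wt_sub_single hki
    have h2 := wt_qx_le ((i:ℕ)-1)
    have h3 : 1 ≤ (i:ℕ) := i.2
    have h4 := wt_add (qx ((i:ℕ)-1)) (k - Finsupp.single i 1)
    omega
  -- T4 membership
  have hT4 : (∑ᶠ p : ℕ × ℕ, ((p.1:ℝ)+(p.2:ℝ)+3) •
      (qv p.1 * qv p.2 * pderiv ((p.1+p.2+2).toPNat (by omega)) μ)) ∈ Wlt (wt k) := by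
    have hsub : (Function.support fun p : ℕ × ℕ => ((p.1:ℝ)+(p.2:ℝ)+3) •
        (qv p.1 * qv p.2 * pderiv ((p.1+p.2+2).toPNat (by omega)) μ))
        ⊆ ↑(Finset.range (wt k) ×ˢ Finset.range (wt k)) := by
      intro p hp
      simp only [Function.mem_support] at hp
      have hk : k ((p.1+p.2+2).toPNat (by omega)) ≠ 0 := by
        intro h0; apply hp; rw [hder, h0]; simp
      have hw := wt_sub_single hk
      have hco : (((p.1+p.2+2).toPNat (by omega) : ℕ+) : ℕ) = p.1+p.2+2 := rfl
      rw [hco] at hw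
      simp only [Finset.coe_product, Set.mem_prod, Finset.mem_coe, Finset.mem_range]
      omega
    rw [finsum_eq_sum_of_support_subset _ hsub]
    refine Submodule.sum_mem _ fun p hp => ?_
    rw [hder, mul_assoc, qv_mul_mono, qv_mul_mono]
    refine Submodule.smul_mem _ _ (monomial_mem_Wlt fun hne => ?_)
    have hki : k ((p.1+p.2+2).toPNat (by omega)) ≠ 0 := fun h => hne (by rw [h, Nat.cast_zero])
    have h1 := wt_sub_single hki
    have hco : (((p.1+p.2+2).toPNat (by omega) : ℕ+) : ℕ) = p.1+p.2+2 := rfl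
    rw [hco] at h1
    have h2 := wt_qx_le p.1
    have h3 := wt_qx_le p.2
    have h4 := wt_add (qx p.1) (qx p.2 + (k - Finsupp.single ((p.1+p.2+2).toPNat (by omega)) 1))
    have h5 := wt_add (qx p.2) (k - Finsupp.single ((p.1+p.2+2).toPNat (by omega)) 1)
    omega
  -- T1 : split into off-diagonal part and diagonal part
  set dR : ℝ := ∑ i ∈ S, (((i:ℕ):ℝ)+1) * (k i) with hdRdef
  set E2 : ℝ := ∑ i ∈ S, (((i:ℕ):ℝ)+1)^2 * (k i) with hE2def
  set E5 : ℝ := ∑ i ∈ S, (((i:ℕ):ℝ) * (((i:ℕ):ℝ)+1)) * (k i) with hE5def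
  have hdR : ((wt k : ℕ) : ℝ) = dR := by
    rw [wt, Finsupp.sum, Nat.cast_sum]
    exact Finset.sum_congr rfl fun i _ => by push_cast; ring
  have hsub2 : (Function.support fun p : ℕ+ × ℕ+ =>
      ((((p.1:ℕ):ℝ)+1) * (((p.2:ℕ):ℝ)+1)) •
        ((qv ((p.1:ℕ)+(p.2:ℕ)) - qv (p.1:ℕ) * qv (p.2:ℕ)) * pderiv p.1 (pderiv p.2 μ)))
      ⊆ ↑(S ×ˢ S) := by
    intro p hp
    simp only [Function.mem_support] at hp
    simp only [Finset.coe_product, Set.mem_prod, Finset.mem_coe, hS, Finsupp.mem_support_iff]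
    constructor
    · intro h0
      apply hp
      have hz : ((k - Finsupp.single p.2 1 : ℕ+ →₀ ℕ) p.1) = 0 := by
        simp only [Finsupp.coe_tsub, Pi.sub_apply]
        have : (Finsupp.single p.2 1) p.1 ≤ 1 := by
          rw [Finsupp.single_apply]; split <;> omega
        omega
      rw [hder2, hz]; simp
    · intro h0; apply hp; rw [hder2, h0]; simp
  have hT1eq : (∑ᶠ p : ℕ+ × ℕ+,
      ((((p.1:ℕ):ℝ)+1) * (((p.2:ℕ):ℝ)+1)) •
        ((qv ((p.1:ℕ)+(p.2:ℕ)) - qv (p.1:ℕ) * qv (p.2:ℕ)) * pderiv p.1 (pderiv p.2 μ)))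
      = (∑ p ∈ S ×ˢ S, ((((p.1:ℕ):ℝ)+1) * (((p.2:ℕ):ℝ)+1)) •
          (qv ((p.1:ℕ)+(p.2:ℕ)) * pderiv p.1 (pderiv p.2 μ)))
        - (∑ p ∈ S ×ˢ S, ((((p.1:ℕ):ℝ)+1) * (((p.2:ℕ):ℝ)+1)) •
            (qv (p.1:ℕ) * qv (p.2:ℕ) * pderiv p.1 (pderiv p.2 μ))) := by
    rw [finsum_eq_sum_of_support_subset _ hsub2, ← Finset.sum_sub_distrib]
    refine Finset.sum_congr rfl fun p _ => ?_
    rw [sub_mul, smul_sub]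
  have hT1a : (∑ p ∈ S ×ˢ S, ((((p.1:ℕ):ℝ)+1) * (((p.2:ℕ):ℝ)+1)) •
      (qv ((p.1:ℕ)+(p.2:ℕ)) * pderiv p.1 (pderiv p.2 μ))) ∈ Wlt (wt k) := by
    refine Submodule.sum_mem _ fun p hp => ?_
    rw [hder2, qv_mul_mono]
    refine Submodule.smul_mem _ _ (monomial_mem_Wlt fun hne => ?_)
    have h2 : k p.2 ≠ 0 := by
      intro h; apply hne; rw [h, Nat.cast_zero, zero_mul]
    have h1 : ((k - Finsupp.single p.2 1 : ℕ+ →₀ ℕ) p.1) ≠ 0 := by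
      intro h; apply hne; rw [h, Nat.cast_zero, mul_zero]
    have a1 := wt_sub_single h2
    have a2 := wt_sub_single h1
    have a3 := wt_qx_le ((p.1:ℕ)+(p.2:ℕ))
    have a4 := wt_add (qx ((p.1:ℕ)+(p.2:ℕ))) (k - Finsupp.single p.2 1 - Finsupp.single p.1 1)
    have a5 : 1 ≤ (p.1:ℕ) := p.1.2
    have a6 : 1 ≤ (p.2:ℕ) := p.2.2
    omega
  have hT1b : (∑ p ∈ S ×ˢ S, ((((p.1:ℕ):ℝ)+1) * (((p.2:ℕ):ℝ)+1)) •
      (qv (p.1:ℕ) * qv (p.2:ℕ) * pderiv p.1 (pderiv p.2 μ)))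
      = (dR * dR - E2) • μ := by
    have step1 : ∀ p ∈ S ×ˢ S, ((((p.1:ℕ):ℝ)+1) * (((p.2:ℕ):ℝ)+1)) •
        (qv (p.1:ℕ) * qv (p.2:ℕ) * pderiv p.1 (pderiv p.2 μ))
        = (((((p.1:ℕ):ℝ)+1) * (k p.1)) * ((((p.2:ℕ):ℝ)+1) * (k p.2))
            - (if p.2 = p.1 then ((((p.1:ℕ):ℝ)+1) * (((p.2:ℕ):ℝ)+1)) * (k p.2) else 0)) • μ := by
      intro p hp
      simp only [Finset.mem_product, hS, Finsupp.mem_support_iff] at hp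
      obtain ⟨hp1, hp2⟩ := hp
      rw [hder2]
      by_cases hz : ((k - Finsupp.single p.2 1 : ℕ+ →₀ ℕ) p.1) = 0
      · have hzc : ((k - Finsupp.single p.2 1 : ℕ+ →₀ ℕ) p.1) = k p.1 - (if p.2 = p.1 then 1 else 0) := by
          simp only [Finsupp.coe_tsub, Pi.sub_apply, Finsupp.single_apply]
        rw [hz, Nat.cast_zero, mul_zero, MvPolynomial.monomial_zero, mul_zero, smul_zero]
        rw [hzc] at hz
        have hcase : p.2 = p.1 ∧ k p.1 = 1 := by
          by_cases h : p.2 = p.1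
          · rw [if_pos h] at hz; exact ⟨h, by omega⟩
          · rw [if_neg h] at hz; omega
        rw [if_pos hcase.1, hcase.1, hcase.2]
        norm_num
      · -- restore the exponent
        have e1 := single_add_tsub hz
        have e2 := single_add_tsub hp2
        have hexp : (Finsupp.single p.1 1 + Finsupp.single p.2 1) +
            (k - Finsupp.single p.2 1 - Finsupp.single p.1 1) = k := by
          rw [add_assoc, add_left_comm, e1, e2]
        rw [qvc, qvc, monomial_mul, monomial_mul, one_mul, one_mul, hexp, hμ,
            MvPolynomial.smul_monomial, MvPolynomial.smul_monomial, smul_eq_mul, smul_eq_mul,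
            mul_one]
        congr 1
        have hzc : (((k - Finsupp.single p.2 1 : ℕ+ →₀ ℕ) p.1) : ℝ)
            = (k p.1 : ℝ) - (if p.2 = p.1 then 1 else 0) := by
          have : ((k - Finsupp.single p.2 1 : ℕ+ →₀ ℕ) p.1) = k p.1 - (if p.2 = p.1 then 1 else 0) := by
            simp only [Finsupp.coe_tsub, Pi.sub_apply, Finsupp.single_apply]
          rw [this]
          split
          · next h => rw [Nat.cast_sub (by omega)]; norm_num
          · norm_num
        rw [hzc]
        split <;> ring
    rw [Finset.sum_congr rfl step1, ← Finset.sum_smul]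
    congr 1
    rw [Finset.sum_sub_distrib]
    congr 1
    · rw [hdRdef, Finset.sum_mul_sum, Finset.sum_product]
    · rw [Finset.sum_product, hE2def]
      refine Finset.sum_congr rfl fun i hi => ?_
      rw [Finset.sum_ite_eq' S i (fun j => (((i:ℕ):ℝ)+1) * (((j:ℕ):ℝ)+1) * (k j)), if_pos hi]
      ring
  -- scalar identity
  have hE : E2 = E5 + dR := by
    rw [hE5def, hdRdef, ← Finset.sum_add_distrib]
    exact Finset.sum_congr rfl fun i _ => by ring
  have hzero : -(dR * dR - E2) - c * dR - E5 - lam c (wt k) = 0 := by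
    rw [hE, lam, hdR]; ring
  -- assemble
  have hT2 := hdiag (fun i => ((i:ℕ):ℝ)+1)
  have hT5 := hdiag (fun i => ((i:ℕ):ℝ) * (((i:ℕ):ℝ)+1))
  rw [Afun, hT1eq, hT2, hT5, hT1b]
  have hfinal : ∀ T1a T3 T4 : Rp,
      T1a - (dR * dR - E2) • μ - c • (((∑ i ∈ S, ((((i:ℕ):ℝ)+1)) * (k i : ℝ))) • μ)
        + s • T3 + T4 - (∑ i ∈ S, (((i:ℕ):ℝ) * (((i:ℕ):ℝ)+1)) * (k i : ℝ)) • μ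
        - lam c (wt k) • μ
      = T1a + s • T3 + T4
        + ((-(dR * dR - E2) - c * dR - E5 - lam c (wt k)) • μ) := by
    intro T1a T3 T4
    rw [hdRdef, hE5def]
    module
  rw [hfinal, hzero, zero_smul, add_zero]
  exact Submodule.add_mem _ (Submodule.add_mem _ hT1a (Submodule.smul_mem _ s hT3)) hT4

section Spectral

variable {c s : ℝ}

lemma Alin_apply (c s : ℝ) (f : Rp) : Alin c s f = Afun c s f := rfl

noncomputable def Esp (c s : ℝ) (m : ℕ) : Submodule ℝ Rp :=
  Module.End.eigenspace (Alin c s) (lam c m)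

noncomputable def Usp (c s : ℝ) (n : ℕ) : Submodule ℝ Rp := ⨆ m ∈ Finset.range n, Esp c s m

lemma Esp_le_Usp {m n : ℕ} (h : m < n) : Esp c s m ≤ Usp c s n :=
  le_iSup₂_of_le m (Finset.mem_range.mpr h) le_rfl

lemma Usp_mono {n n' : ℕ} (h : n ≤ n') : Usp c s n ≤ Usp c s n' :=
  iSup₂_le fun m hm => Esp_le_Usp (lt_of_lt_of_le (Finset.mem_range.mp hm) h)

lemma map_sub_lam (hc : 0 < c) {m n : ℕ} (hmn : m ≠ n) :
    Submodule.map (Alin c s - lam c n • (1 : Module.End ℝ Rp)) (Esp c s m) = Esp c s m := by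
  have hne : lam c m - lam c n ≠ 0 := sub_ne_zero.mpr fun h => hmn (lam_inj hc h)
  have hact : ∀ x ∈ Esp c s m, (Alin c s - lam c n • (1 : Module.End ℝ Rp)) x
      = (lam c m - lam c n) • x := by
    intro x hx
    have hx' := Module.End.mem_eigenspace_iff.mp hx
    simp only [LinearMap.sub_apply, LinearMap.smul_apply, Module.End.one_apply, hx', sub_smul]
  apply le_antisymm
  · rintro x ⟨y, hy, rfl⟩
    rw [hact y hy]
    exact Submodule.smul_mem _ _ hy
  · intro x hx
    refine ⟨(lam c m - lam c n)⁻¹ • x, Submodule.smul_mem _ _ hx, ?_⟩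
    rw [hact _ (Submodule.smul_mem _ _ hx), smul_smul, mul_inv_cancel₀ hne, one_smul]

lemma map_Usp (hc : 0 < c) (n : ℕ) :
    Submodule.map (Alin c s - lam c n • (1 : Module.End ℝ Rp)) (Usp c s n) = Usp c s n := by
  rw [Usp]
  simp_rw [Submodule.map_iSup]
  exact iSup_congr fun m => iSup_congr fun hm =>
    map_sub_lam hc (Nat.ne_of_lt (Finset.mem_range.mp hm))

lemma exists_eigvec (hc : 0 < c) : ∀ n, ∀ k : ℕ+ →₀ ℕ, wt k = n →
    ∃ v ∈ Esp c s n, (monomial k 1 : Rp) - v ∈ Usp c s n := by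
  intro n
  induction n using Nat.strong_induction_on with
  | _ n IH =>
    intro k hk
    have hWU : Wlt n ≤ Usp c s n := by
      intro f hf
      refine mem_of_support fun u hu => ?_
      have hwu := hf u hu
      obtain ⟨v, hv, hres⟩ := IH (wt u) hwu u rfl
      have h1 : (monomial u 1 : Rp) = v + (monomial u 1 - v) := by abel
      rw [h1]
      exact Submodule.add_mem _ (Esp_le_Usp hwu hv) (Usp_mono hwu.le hres)
    have hK := Afun_monomial c s k
    rw [hk] at hK
    have hg : Afun c s (monomial k 1) - lam c n • monomial k 1 ∈
        Submodule.map (Alin c s - lam c n • (1 : Module.End ℝ Rp)) (Usp c s n) := by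
      rw [map_Usp hc n]
      exact hWU hK
    obtain ⟨u, hu, huv⟩ := Submodule.mem_map.mp hg
    refine ⟨monomial k 1 - u, ?_, ?_⟩
    · rw [Esp, Module.End.mem_eigenspace_iff]
      have h3 : Alin c s u - lam c n • u
          = Afun c s (monomial k 1) - lam c n • monomial k 1 := by
        simpa [LinearMap.sub_apply, LinearMap.smul_apply] using huv
      have h4 : Alin c s u = Afun c s (monomial k 1) - lam c n • monomial k 1 + lam c n • u := by
        rw [← h3]; abel
      have h5 : Alin c s (monomial k 1 - u) = Afun c s (monomial k 1) - Alin c s u := by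
        rw [map_sub]; rfl
      rw [h5, h4, smul_sub]
      abel
    · have h6 : (monomial k 1 : Rp) - (monomial k 1 - u) = u := by abel
      rw [h6]
      exact hu

lemma mono_mem_Usp (hc : 0 < c) (k : ℕ+ →₀ ℕ) {n : ℕ} (h : wt k < n) :
    (monomial k 1 : Rp) ∈ Usp c s n := by
  obtain ⟨v, hv, hres⟩ := exists_eigvec hc (wt k) k rfl
  have h1 : (monomial k 1 : Rp) = v + (monomial k 1 - v) := by abel
  rw [h1]
  exact Submodule.add_mem _ (Esp_le_Usp h hv) (Usp_mono h.le hres)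

lemma Wlt_le_Usp (hc : 0 < c) (n : ℕ) : Wlt n ≤ Usp c s n :=
  fun _ hf => mem_of_support fun u hu => mono_mem_Usp hc u (hf u hu)

lemma eig_top (hc : 0 < c) {r : ℝ} {f : Rp} (hf : f ≠ 0) (heig : Alin c s f = r • f) :
    ∃ d, r = lam c d ∧ (∀ u ∈ f.support, wt u ≤ d) ∧ ∃ u ∈ f.support, wt u = d := by
  classical
  have hne : f.support.Nonempty := by
    rw [Finset.nonempty_iff_ne_empty]
    intro h
    exact hf (MvPolynomial.support_eq_empty.mp h)
  obtain ⟨u0, hu0mem, hu0⟩ := Finset.exists_mem_eq_sup f.support hne wt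
  set d := f.support.sup wt with hd
  have hexp : Alin c s f = ∑ u ∈ f.support, MvPolynomial.coeff u f • Alin c s (monomial u 1) := by
    conv_lhs => rw [MvPolynomial.as_sum f]
    rw [map_sum]
    refine Finset.sum_congr rfl fun u hu => ?_
    rw [show (monomial u (MvPolynomial.coeff u f) : Rp) = MvPolynomial.coeff u f • monomial u 1
        from by rw [MvPolynomial.smul_monomial, smul_eq_mul, mul_one], map_smul]
  have hco : MvPolynomial.coeff u0 (Alin c s f) = lam c d * MvPolynomial.coeff u0 f := by
    rw [hexp, MvPolynomial.coeff_sum]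
    have hterm : ∀ u ∈ f.support, MvPolynomial.coeff u0 (MvPolynomial.coeff u f • Alin c s (monomial u 1))
        = if u = u0 then lam c d * MvPolynomial.coeff u0 f else 0 := by
      intro u hu
      have hKu := Afun_monomial c s u
      have hsplit : Alin c s (monomial u 1) = lam c (wt u) • monomial u 1 +
          (Afun c s (monomial u 1) - lam c (wt u) • monomial u 1) := by
        rw [Alin_apply]; abel
      have hg0 : MvPolynomial.coeff u0
          (Afun c s (monomial u 1) - lam c (wt u) • monomial u 1) = 0 := by
        by_contra h0
        have hmem : u0 ∈ (Afun c s (monomial u 1) - lam c (wt u) • monomial u 1).support :=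
          MvPolynomial.mem_support_iff.mpr h0
        have hlt := hKu u0 hmem
        have h2 : wt u ≤ d := Finset.le_sup hu
        omega
      rw [MvPolynomial.coeff_smul, hsplit, MvPolynomial.coeff_add, hg0, add_zero,
        MvPolynomial.coeff_smul, MvPolynomial.coeff_monomial]
      by_cases h : u = u0
      · subst h
        rw [if_pos rfl, if_pos rfl, ← hu0, smul_eq_mul, smul_eq_mul, mul_one]
        have hcu : MvPolynomial.coeff u f ≠ 0 := MvPolynomial.mem_support_iff.mp hu
        ring
      · rw [if_neg h, if_neg h, smul_zero, smul_zero]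
    rw [Finset.sum_congr rfl hterm,
      Finset.sum_ite_eq' f.support u0 (fun _ => lam c d * MvPolynomial.coeff u0 f),
      if_pos hu0mem]
  have hrco : MvPolynomial.coeff u0 (r • f) = r * MvPolynomial.coeff u0 f := by
    rw [MvPolynomial.coeff_smul, smul_eq_mul]
  have hcancel : lam c d * MvPolynomial.coeff u0 f = r * MvPolynomial.coeff u0 f := by
    rw [← hco, ← hrco, heig]
  have hc0 : MvPolynomial.coeff u0 f ≠ 0 := MvPolynomial.mem_support_iff.mp hu0mem
  have hr : r = lam c d := (mul_right_cancel₀ hc0 hcancel).symm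
  exact ⟨d, hr, fun u hu => Finset.le_sup hu, u0, hu0mem, hu0.symm⟩

lemma Esp_le_Wlt (hc : 0 < c) (m : ℕ) : Esp c s m ≤ Wlt (m + 1) := by
  intro f hf
  by_cases hf0 : f = 0
  · rw [hf0]; exact Submodule.zero_mem _
  obtain ⟨d, hr, hub, -⟩ := eig_top hc hf0 (Module.End.mem_eigenspace_iff.mp hf)
  have hdm : m = d := lam_inj hc hr
  intro u hu
  have := hub u hu
  omega

lemma Usp_le_Wlt (hc : 0 < c) (n : ℕ) : Usp c s n ≤ Wlt n :=
  iSup₂_le fun m hm => (Esp_le_Wlt hc m).trans (Wlt_mono (Finset.mem_range.mp hm))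

lemma one_mem_E0 (c s : ℝ) : (1 : Rp) ∈ Esp c s 0 := by
  have hK := Afun_monomial c s 0
  rw [wt_zero, Wlt_zero, Submodule.mem_bot, sub_eq_zero] at hK
  have h1 : (monomial (0 : ℕ+ →₀ ℕ) (1:ℝ) : Rp) = 1 := by
    rw [MvPolynomial.monomial_zero', MvPolynomial.C_1]
  rw [Esp, Module.End.mem_eigenspace_iff, Alin_apply, ← h1, hK]

end Spectral

section Partitions

noncomputable def Phi (u : ℕ+ →₀ ℕ) : Multiset ℕ :=
  (Finsupp.toMultiset u).map fun i : ℕ+ => (i : ℕ) + 1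

lemma Phi_inj : Function.Injective Phi := by
  intro a b h
  simp only [Phi] at h
  have h1 : Finsupp.toMultiset a = Finsupp.toMultiset b := by
    refine Multiset.map_injective (f := fun i : ℕ+ => (i : ℕ) + 1) ?_ h
    intro i j hij
    have hij' : (i : ℕ) + 1 = (j : ℕ) + 1 := hij
    exact PNat.coe_injective (by omega)
  have h2 := congrArg Multiset.toFinsupp h1
  rwa [Finsupp.toMultiset_toFinsupp, Finsupp.toMultiset_toFinsupp] at h2

lemma Phi_sum (u : ℕ+ →₀ ℕ) : (Phi u).sum = wt u := by
  induction u using Finsupp.induction with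
  | zero => simp [Phi, wt_zero]
  | single_add i e f hif he ih =>
    rw [Phi, Finsupp.toMultiset_add, Multiset.map_add, Multiset.sum_add, wt_add, wt_single,
      Finsupp.toMultiset_single, Multiset.nsmul_singleton, Multiset.map_replicate,
      Multiset.sum_replicate, smul_eq_mul]
    rw [Phi] at ih
    rw [ih]

noncomputable def toPartFun (m : ℕ) (u : {u : ℕ+ →₀ ℕ // wt u = m}) :
    {p : Nat.Partition m // ∀ j ∈ p.parts, 2 ≤ j} :=
  ⟨⟨Phi u.1,
    fun {j} hj => by
      obtain ⟨i, -, rfl⟩ := Multiset.mem_map.mp hj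
      omega,
    by rw [Phi_sum, u.2]⟩,
   fun j hj => by
    obtain ⟨i, -, rfl⟩ := Multiset.mem_map.mp hj
    have h2 : 1 ≤ (i : ℕ) := i.2
    omega⟩

lemma toPartFun_bij (m : ℕ) : Function.Bijective (toPartFun m) := by
  constructor
  · intro a b hab
    have h1 : Phi a.1 = Phi b.1 := congrArg (fun q => q.1.parts) hab
    exact Subtype.ext (Phi_inj h1)
  · rintro ⟨p, hp⟩
    classical
    set M : Multiset ℕ+ := p.parts.map fun j => (j - 1).toPNat' with hM
    set u : ℕ+ →₀ ℕ := Multiset.toFinsupp M with hu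
    have hPhi : Phi u = p.parts := by
      rw [Phi, hu, Multiset.toFinsupp_toMultiset, hM, Multiset.map_map]
      have hid : ∀ j ∈ p.parts,
          ((fun i : ℕ+ => (i : ℕ) + 1) ∘ fun j => (j - 1).toPNat') j = j := by
        intro j hj
        have h2 := hp j hj
        simp only [Function.comp_apply]
        rw [PNat.toPNat'_coe (by omega : 0 < j - 1)]
        omega
      rw [Multiset.map_congr rfl hid, Multiset.map_id']
    have hwt : wt u = m := by rw [← Phi_sum, hPhi, p.parts_sum]
    refine ⟨⟨u, hwt⟩, ?_⟩
    apply Subtype.ext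
    exact Nat.Partition.ext hPhi

noncomputable def levelEquiv (m : ℕ) :
    {u : ℕ+ →₀ ℕ // wt u = m} ≃ {p : Nat.Partition m // ∀ j ∈ p.parts, 2 ≤ j} :=
  Equiv.ofBijective _ (toPartFun_bij m)

lemma level_finite (m : ℕ) : {u : ℕ+ →₀ ℕ | wt u = m}.Finite := by
  have h : Finite {u : ℕ+ →₀ ℕ // wt u = m} := Finite.of_equiv _ (levelEquiv m).symm
  exact Set.finite_coe_iff.mp h

lemma Kfin (n : ℕ) : {u : ℕ+ →₀ ℕ | wt u < n}.Finite := by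
  have h : {u : ℕ+ →₀ ℕ | wt u < n} = ⋃ m ∈ Set.Iio n, {u : ℕ+ →₀ ℕ | wt u = m} := by
    ext u
    simp only [Set.mem_setOf_eq, Set.mem_iUnion, Set.mem_Iio, exists_prop]
    constructor
    · intro hu; exact ⟨wt u, hu, rfl⟩
    · rintro ⟨m, hm, rfl⟩; exact hm
  rw [h]
  exact Set.Finite.biUnion (Set.finite_Iio n) fun m _ => level_finite m

lemma card_split (m : ℕ) : Nat.card {u : ℕ+ →₀ ℕ // wt u < m + 1}
    = Nat.card {u : ℕ+ →₀ ℕ // wt u < m} + Nat.card {u : ℕ+ →₀ ℕ // wt u = m} := by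
  have hdisj : Disjoint {u : ℕ+ →₀ ℕ | wt u < m} {u : ℕ+ →₀ ℕ | wt u = m} := by
    rw [Set.disjoint_left]
    intro u hu1 hu2
    simp only [Set.mem_setOf_eq] at hu1 hu2
    omega
  have hunion : {u : ℕ+ →₀ ℕ | wt u < m + 1}
      = {u : ℕ+ →₀ ℕ | wt u < m} ∪ {u : ℕ+ →₀ ℕ | wt u = m} := by
    ext u
    simp only [Set.mem_setOf_eq, Set.mem_union]
    omega
  have h1 := Set.ncard_union_eq hdisj (Kfin m) (level_finite m)
  have e1 : Nat.card {u : ℕ+ →₀ ℕ // wt u < m + 1} = ({u : ℕ+ →₀ ℕ | wt u < m + 1}).ncard :=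
    Nat.card_coe_set_eq _
  have e2 : Nat.card {u : ℕ+ →₀ ℕ // wt u < m} = ({u : ℕ+ →₀ ℕ | wt u < m}).ncard :=
    Nat.card_coe_set_eq _
  have e3 : Nat.card {u : ℕ+ →₀ ℕ // wt u = m} = ({u : ℕ+ →₀ ℕ | wt u = m}).ncard :=
    Nat.card_coe_set_eq _
  rw [e1, e2, e3, hunion]
  exact h1

end Partitions

section Dims

variable {c s : ℝ}

lemma Wlt_eq_span (n : ℕ) :
    Wlt n = Submodule.span ℝ ((fun u => (monomial u 1 : Rp)) '' {u : ℕ+ →₀ ℕ | wt u < n}) := by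
  apply le_antisymm
  · intro f hf
    exact mem_of_support fun u hu => Submodule.subset_span ⟨u, hf u hu, rfl⟩
  · rw [Submodule.span_le]
    rintro _ ⟨u, hu, rfl⟩
    exact monomial_mem_Wlt fun _ => hu

lemma Wlt_findim (n : ℕ) : FiniteDimensional ℝ (Wlt n) := by
  rw [Wlt_eq_span]
  exact FiniteDimensional.span_of_finite ℝ (Set.Finite.image _ (Kfin n))

lemma finrank_Wlt (n : ℕ) :
    Module.finrank ℝ (Wlt n) = Nat.card {u : ℕ+ →₀ ℕ // wt u < n} := by
  classical
  haveI inst1 : Fintype {u : ℕ+ →₀ ℕ // wt u < n} := (Kfin n).fintype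
  haveI inst2 : Fintype ↥{u : ℕ+ →₀ ℕ | wt u < n} := (Kfin n).fintype
  have hli : LinearIndependent ℝ
      (fun u : {u : ℕ+ →₀ ℕ | wt u < n} => (monomial u.1 1 : Rp)) := by
    have hb := (MvPolynomial.basisMonomials ℕ+ ℝ).linearIndependent
    have h2 := hb.comp (fun u : {u : ℕ+ →₀ ℕ | wt u < n} => u.1) Subtype.val_injective
    simp only [MvPolynomial.coe_basisMonomials] at h2
    exact h2
  have hspan : Wlt n = Submodule.span ℝ
      (Set.range fun u : {u : ℕ+ →₀ ℕ | wt u < n} => (monomial u.1 1 : Rp)) := by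
    rw [Wlt_eq_span, Set.image_eq_range]
  rw [hspan, finrank_span_eq_card hli]
  exact (Nat.card_eq_fintype_card (α := ↥{u : ℕ+ →₀ ℕ | wt u < n})).symm

lemma Wlt_succ (hc : 0 < c) (m : ℕ) : Wlt (m + 1) = Wlt m ⊔ Esp c s m := by
  apply le_antisymm
  · refine (Wlt_le_Usp (s := s) hc (m + 1)).trans (iSup₂_le fun j hj => ?_)
    rcases Nat.lt_succ_iff_lt_or_eq.mp (Finset.mem_range.mp hj) with h | rfl
    · exact le_sup_of_le_left ((Esp_le_Wlt hc j).trans (Wlt_mono h))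
    · exact le_sup_right
  · exact sup_le (Wlt_mono (Nat.le_succ m)) (Esp_le_Wlt hc m)

set_option synthInstance.maxHeartbeats 1000000 in
lemma Wlt_disj_Esp (hc : 0 < c) (m : ℕ) : Disjoint (Wlt m) (Esp c s (m : ℕ)) := by
  have hind := Module.End.eigenspaces_iSupIndep (Alin c s)
  have h2 : Wlt m ≤ ⨆ (r : ℝ) (_ : r ≠ lam c m), Module.End.eigenspace (Alin c s) r := by
    refine (Wlt_le_Usp (s := s) hc m).trans (iSup₂_le fun j hj => ?_)
    have hne : lam c j ≠ lam c m :=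
      fun h => (Nat.ne_of_lt (Finset.mem_range.mp hj)) (lam_inj hc h)
    exact le_iSup₂_of_le (lam c j) hne le_rfl
  exact ((hind (lam c m)).mono_right h2).symm

lemma finrank_Esp (hc : 0 < c) (m : ℕ) :
    Module.finrank ℝ (Esp c s m) = Nat.card {u : ℕ+ →₀ ℕ // wt u = m} := by
  haveI h1 : FiniteDimensional ℝ (Wlt (m + 1)) := Wlt_findim _
  haveI h2 : FiniteDimensional ℝ (Wlt m) := Wlt_findim _
  haveI h3 : FiniteDimensional ℝ (Esp c s m) :=
    Submodule.finiteDimensional_of_le (Esp_le_Wlt hc m)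
  have hsum := Submodule.finrank_sup_add_finrank_inf_eq (Wlt m) (Esp c s m)
  rw [(Wlt_disj_Esp hc m).eq_bot, finrank_bot, add_zero, ← Wlt_succ hc m] at hsum
  have hcard := card_split m
  rw [← finrank_Wlt, ← finrank_Wlt] at hcard
  omega

end Dims

set_option synthInstance.maxHeartbeats 1000000 in
open Module in
/-- For `c > 0`, the polynomial algebra `R = ℝ[q₁, q₂, …]` is the direct
sum of the eigenspaces of `A`; the eigenvalues of `A` are exactly `0` and
`-m(m-1+c)` for integers `m ≥ 2`; the `0`-eigenspace is the (one-dimensional) space of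
constants; and the eigenspace for `-m(m-1+c)` has dimension equal to the number of
partitions of `m` all of whose parts are `≥ 2`. -/
theorem Alin_spectral_structure (c s : ℝ) (hc : 0 < c) :
    (iSupIndep fun r : ℝ => Module.End.eigenspace (Alin c s) r) ∧
      ((⨆ r : ℝ, Module.End.eigenspace (Alin c s) r) = ⊤) ∧
      (∀ r : ℝ, Module.End.HasEigenvalue (Alin c s) r ↔
        r = 0 ∨ ∃ m : ℕ, 2 ≤ m ∧ r = -((m : ℝ) * ((m : ℝ) - 1 + c))) ∧
      (Module.End.eigenspace (Alin c s) 0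
        = Submodule.span ℝ {(1 : MvPolynomial ℕ+ ℝ)}) ∧
      (∀ m : ℕ, 2 ≤ m →
        Module.finrank ℝ
            (Module.End.eigenspace (Alin c s) (-((m : ℝ) * ((m : ℝ) - 1 + c))))
          = Nat.card {p : m.Partition // ∀ j ∈ p.parts, 2 ≤ j}) := by
  refine ⟨Module.End.eigenspaces_iSupIndep (Alin c s), ?_, ?_, ?_, ?_⟩
  · -- supremum of eigenspaces is everything
    rw [eq_top_iff]
    intro f _
    have hf : f ∈ Wlt (f.support.sup wt + 1) :=
      fun u hu => Nat.lt_succ_of_le (Finset.le_sup hu)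
    have hU := Wlt_le_Usp (s := s) hc (f.support.sup wt + 1) hf
    have hle : Usp c s (f.support.sup wt + 1)
        ≤ ⨆ r : ℝ, Module.End.eigenspace (Alin c s) r :=
      iSup₂_le fun m _ => le_iSup (fun r => Module.End.eigenspace (Alin c s) r) (lam c m)
    exact hle hU
  · -- characterization of eigenvalues
    intro r
    constructor
    · intro hr
      obtain ⟨v, hv⟩ := hr.exists_hasEigenvector
      obtain ⟨d, hrd, -, u0, hu0, hwu0⟩ :=
        eig_top hc hv.2 (Module.End.mem_eigenspace_iff.mp hv.1)
      have hd1 : d ≠ 1 := by rw [← hwu0]; exact wt_ne_one u0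
      rcases Nat.eq_zero_or_pos d with h0 | hpos
      · left; rw [hrd, h0, lam_zero]
      · right; exact ⟨d, by omega, hrd⟩
    · rintro (rfl | ⟨m, hm, rfl⟩)
      · refine Module.End.hasEigenvalue_of_hasEigenvector (x := (1 : Rp)) ⟨?_, one_ne_zero⟩
        have h1 := one_mem_E0 c s
        rwa [Esp, lam_zero] at h1
      · set k0 : ℕ+ →₀ ℕ := Finsupp.single (⟨m - 1, by omega⟩ : ℕ+) 1 with hk0
        have hwt : wt k0 = m := by
          erw [hk0, wt_single, one_mul]
          show (m - 1) + 1 = m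
          omega
        obtain ⟨v, hv, hres⟩ := exists_eigvec (s := s) hc (wt k0) k0 rfl
        have hvne : v ≠ 0 := by
          intro h0
          rw [h0, sub_zero] at hres
          have hin : (monomial k0 1 : Rp) ∈ Wlt (wt k0) := Usp_le_Wlt hc (wt k0) hres
          have hk0mem : k0 ∈ (monomial k0 (1 : ℝ)).support := by
            rw [MvPolynomial.support_monomial, if_neg one_ne_zero]
            exact Finset.mem_singleton_self _
          exact lt_irrefl _ (hin k0 hk0mem)
        have hev : Module.End.HasEigenvalue (Alin c s) (lam c m) := by
          refine Module.End.hasEigenvalue_of_hasEigenvector (x := v) ⟨?_, hvne⟩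
          rw [← hwt]
          exact hv
        exact hev
  · -- eigenspace of 0 is the constants
    apply le_antisymm
    · intro f hf
      have hf' : f ∈ Esp c s 0 := by rwa [Esp, lam_zero]
      have hW := Esp_le_Wlt hc 0 hf'
      rw [Submodule.mem_span_singleton]
      refine ⟨MvPolynomial.coeff 0 f, ?_⟩
      have hsupp : f.support ⊆ {0} := by
        intro u hu
        have h1 := hW u hu
        rw [Finset.mem_singleton]
        exact wt_eq_zero (by omega)
      have hform : f = monomial 0 (MvPolynomial.coeff 0 f) := by
        have h1 : ∑ v ∈ f.support, (monomial v (MvPolynomial.coeff v f) : Rp)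
            = ∑ v ∈ ({0} : Finset (ℕ+ →₀ ℕ)), monomial v (MvPolynomial.coeff v f) :=
          Finset.sum_subset hsupp (fun u _ hu => by
            rw [MvPolynomial.notMem_support_iff.mp hu, map_zero])
        rw [Finset.sum_singleton] at h1
        rw [← h1]
        exact MvPolynomial.as_sum f
      conv_rhs => rw [hform]
      rw [MvPolynomial.smul_eq_C_mul, mul_one, MvPolynomial.monomial_zero']
    · rw [Submodule.span_le, Set.singleton_subset_iff]
      have h1 := one_mem_E0 c s
      rwa [Esp, lam_zero] at h1
  · -- dimensions of eigenspaces
    intro m _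
    have hfr := finrank_Esp (s := s) hc m
    have hgoal : Module.End.eigenspace (Alin c s) (-((m : ℝ) * ((m : ℝ) - 1 + c)))
        = Esp c s m := rfl
    rw [hgoal, hfr]
    exact Nat.card_congr (levelEquiv m)
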